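/- Let w* ∈ ℝ^I with w*_i > 0 for every buyer i, and let u* be implementable by seller k and maximize Σ_i B_i ln(u_i + w*_i) over all u implementable by seller k. If u is implementable by seller k and satisfies u_i ≥ u*_i/2 for every buyer i, then Σ_i B_i · u_i/(u_i + w*_i) ≤ 3 · Σ_i B_i · u*_i/(u*_i + w*_i). -/

import Mathlib

open Finset

/-- A utility vector `u` is implementable by the seller owning the items `Jk`
if it arises from a feasible allocation of those items. -/
def Implementable {I J : Type*} [Fintype I] [Fintype J]
    (v : I → J → ℝ) (Jk : Finset J) (u : I → ℝ) : Prop :=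
  ∃ x : I → J → ℝ, (∀ i j, 0 ≤ x i j) ∧ (∀ j ∈ Jk, ∑ i, x i j ≤ 1) ∧
    ∀ i, u i = ∑ j ∈ Jk, v i j * x i j

/-- If `u*` maximizes `Σ_i B_i ln(u_i + w*_i)` over utility vectors implementable by
seller `k`, then any implementable `u` with `u_i ≥ u*_i / 2` for every buyer earns
revenue at most 3 times that of `u*`. -/
theorem statement13 {I J : Type*} [Fintype I] [Fintype J]
    (B : I → ℝ) (v : I → J → ℝ) (Jk : Finset J)
    (hB : ∀ i, 0 < B i) (hv : ∀ i j, 0 ≤ v i j)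
    (wstar : I → ℝ) (hw : ∀ i, 0 < wstar i)
    (ustar : I → ℝ) (hustar : Implementable v Jk ustar)
    (hmax : ∀ u : I → ℝ, Implementable v Jk u →
      ∑ i, B i * Real.log (u i + wstar i) ≤ ∑ i, B i * Real.log (ustar i + wstar i)) :
    ∀ u : I → ℝ, Implementable v Jk u → (∀ i, ustar i / 2 ≤ u i) →
      ∑ i, B i * (u i / (u i + wstar i)) ≤
        3 * ∑ i, B i * (ustar i / (ustar i + wstar i)) := by
  intro u hu hhalf
  obtain ⟨xs, hxs0, hxs1, hxs2⟩ := hustar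
  obtain ⟨x, hx0, hx1, hx2⟩ := hu
  have hustar_nn : ∀ i, 0 ≤ ustar i := by
    intro i
    rw [hxs2 i]
    exact Finset.sum_nonneg fun j _ => mul_nonneg (hv i j) (hxs0 i j)
  have hu_nn : ∀ i, 0 ≤ u i := by
    intro i
    rw [hx2 i]
    exact Finset.sum_nonneg fun j _ => mul_nonneg (hv i j) (hx0 i j)
  -- the midpoint utility vector is implementable
  have humI : Implementable v Jk (fun i => (ustar i + u i) / 2) := by
    refine ⟨fun i j => (xs i j + x i j) / 2,
      fun i j => div_nonneg (add_nonneg (hxs0 i j) (hx0 i j)) (by norm_num), ?_, ?_⟩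
    · intro j hj
      have h1 := hxs1 j hj
      have h2 := hx1 j hj
      have : ∑ i, (xs i j + x i j) / 2 = (∑ i, xs i j + ∑ i, x i j) / 2 := by
        rw [← Finset.sum_add_distrib, ← Finset.sum_div]
      rw [this]; linarith
    · intro i
      simp only
      rw [hxs2 i, hx2 i, ← Finset.sum_add_distrib, Finset.sum_div]
      exact Finset.sum_congr rfl fun j _ => by ring
  have hlog := hmax _ humI
  -- key summed inequality from optimality and concavity of log
  have hsum_h : ∑ i, B i * ((u i - ustar i) / (u i + ustar i + 2 * wstar i)) ≤ 0 := by
    have step : ∀ i, B i * ((u i - ustar i) / (u i + ustar i + 2 * wstar i)) ≤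
        B i * (Real.log ((ustar i + u i) / 2 + wstar i) - Real.log (ustar i + wstar i)) := by
      intro i
      have ha : 0 < ustar i + wstar i := by linarith [hustar_nn i, hw i]
      have hb : 0 < (ustar i + u i) / 2 + wstar i := by
        have := hustar_nn i; have := hu_nn i; have := hw i; linarith
      refine mul_le_mul_of_nonneg_left ?_ (hB i).le
      have hlog1 := Real.log_le_sub_one_of_pos (div_pos ha hb)
      rw [Real.log_div (ne_of_gt ha) (ne_of_gt hb)] at hlog1
      have hexp : (ustar i + wstar i) / ((ustar i + u i) / 2 + wstar i) - 1 =
          -((u i - ustar i) / (u i + ustar i + 2 * wstar i)) := by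
        have hd : u i + ustar i + 2 * wstar i ≠ 0 := by
          have := hustar_nn i; have := hu_nn i; have := hw i; intro h; linarith
        have h2b : (ustar i + u i) / 2 + wstar i = (u i + ustar i + 2 * wstar i) / 2 := by ring
        rw [h2b]
        rw [div_div_eq_mul_div, div_sub_one hd, ← neg_div]
        congr 1
        ring
      rw [hexp] at hlog1
      linarith
    calc ∑ i, B i * ((u i - ustar i) / (u i + ustar i + 2 * wstar i))
        ≤ ∑ i, B i * (Real.log ((ustar i + u i) / 2 + wstar i) - Real.log (ustar i + wstar i)) :=
          Finset.sum_le_sum fun i _ => step i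
      _ = (∑ i, B i * Real.log ((ustar i + u i) / 2 + wstar i)) -
            ∑ i, B i * Real.log (ustar i + wstar i) := by
          rw [← Finset.sum_sub_distrib]
          exact Finset.sum_congr rfl fun i _ => by ring
      _ ≤ 0 := by linarith [hlog]
  -- pointwise bound
  have hpt : ∀ i, B i * (u i / (u i + wstar i)) ≤
      3 * (B i * (ustar i / (ustar i + wstar i))) +
        2 * (B i * ((u i - ustar i) / (u i + ustar i + 2 * wstar i))) := by
    intro i
    have ha : (0:ℝ) ≤ u i := hu_nn i
    have hb : (0:ℝ) ≤ ustar i := hustar_nn i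
    have hwi : (0:ℝ) < wstar i := hw i
    have h1 : 0 < u i + wstar i := by linarith
    have h2 : 0 < ustar i + wstar i := by linarith
    have h3 : 0 < u i + ustar i + 2 * wstar i := by linarith
    have key : u i / (u i + wstar i) ≤
        3 * (ustar i / (ustar i + wstar i)) + 2 * ((u i - ustar i) / (u i + ustar i + 2 * wstar i)) := by
      have expand : 3 * (ustar i / (ustar i + wstar i)) +
          2 * ((u i - ustar i) / (u i + ustar i + 2 * wstar i)) =
          (3 * ustar i * (u i + ustar i + 2 * wstar i) +
            2 * (u i - ustar i) * (ustar i + wstar i)) /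
            ((ustar i + wstar i) * (u i + ustar i + 2 * wstar i)) := by
        field_simp
      rw [expand, div_le_div_iff₀ h1 (mul_pos h2 h3)]
      nlinarith [mul_nonneg (mul_nonneg ha hb) hwi.le, mul_nonneg (mul_nonneg ha ha) hb,
        mul_nonneg (mul_nonneg ha ha) hwi.le, mul_nonneg (mul_nonneg hb hb) hwi.le,
        mul_nonneg (mul_nonneg hb hwi.le) hwi.le]
    have := mul_le_mul_of_nonneg_left key (hB i).le
    linarith [this]
  calc ∑ i, B i * (u i / (u i + wstar i))
      ≤ ∑ i, (3 * (B i * (ustar i / (ustar i + wstar i))) +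
          2 * (B i * ((u i - ustar i) / (u i + ustar i + 2 * wstar i)))) :=
        Finset.sum_le_sum fun i _ => hpt i
    _ = 3 * (∑ i, B i * (ustar i / (ustar i + wstar i))) +
          2 * ∑ i, B i * ((u i - ustar i) / (u i + ustar i + 2 * wstar i)) := by
        rw [Finset.sum_add_distrib, ← Finset.mul_sum, ← Finset.mul_sum]
    _ ≤ 3 * ∑ i, B i * (ustar i / (ustar i + wstar i)) := by linarith [hsum_h]
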